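/- Let Q ∈ ℝ^{p×p} and R ∈ ℝ^{r×r} be positive definite, A ∈ ℝ^{p×p}, B ∈ ℝ^{p×r}. If a positive semidefinite matrix K ∈ ℝ^{p×p} satisfies the discrete algebraic Riccati equation K = Q + AᵀKA − AᵀKB(BᵀKB+R)^{-1}BᵀKA, then the linear feedback matrix L = −(BᵀKB+R)^{-1}BᵀKA is a stabilizer: the matrix A+BL has spectral radius less than 1. -/

import Mathlib

open Matrix Polynomial
open scoped ComplexOrder

/-- A real square matrix has spectral radius less than one: every complex root of its
characteristic polynomial has modulus less than one. -/
def SpecRadiusLtOne {p : ℕ} (D : Matrix (Fin p) (Fin p) ℝ) : Prop :=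
  ∀ lam : ℂ, ((D.map (algebraMap ℝ ℂ)).charpoly).IsRoot lam → ‖lam‖ < 1

lemma eval_charpoly' {n : ℕ} (N : Matrix (Fin n) (Fin n) ℂ) (t : ℂ) :
    (N.charpoly).eval t = (Matrix.diagonal (fun _ => t) - N).det := by
  have h := RingHom.map_det (Polynomial.evalRingHom t) (charmatrix N)
  rw [Matrix.charpoly]
  rw [show (charmatrix N).det.eval t = (Polynomial.evalRingHom t) (charmatrix N).det from rfl, h]
  congr 1
  ext i j
  by_cases hij : i = j
  · subst hij; simp [charmatrix_apply_eq, Matrix.diagonal]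
  · simp [charmatrix_apply_ne _ _ _ hij, Matrix.diagonal, hij, (Matrix.sub_apply _ _ _ _)]

lemma ctmap {m n : ℕ} (C : Matrix (Fin m) (Fin n) ℝ) :
    (Cᴴ).map (algebraMap ℝ ℂ) = (C.map (algebraMap ℝ ℂ))ᴴ := by
  refine Matrix.conjTranspose_map _ (fun x => ?_)
  show algebraMap ℝ ℂ x = star (algebraMap ℝ ℂ x)
  simp [Complex.conj_ofReal]

lemma map_psd {n : ℕ} {K : Matrix (Fin n) (Fin n) ℝ} (hK : K.PosSemidef) :
    (K.map (algebraMap ℝ ℂ)).PosSemidef := by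
  open scoped MatrixOrder Matrix.Norms.L2Operator in
  obtain ⟨C, rfl⟩ := CStarAlgebra.nonneg_iff_eq_star_mul_self.mp hK.nonneg
  rw [Matrix.star_eq_conjTranspose, Matrix.map_mul, ctmap]
  exact Matrix.posSemidef_conjTranspose_mul_self _

lemma star_mulVec_map {n : ℕ} (N : Matrix (Fin n) (Fin n) ℝ) (w : Fin n → ℂ) :
    (N.map (algebraMap ℝ ℂ)) *ᵥ (star w) = star ((N.map (algebraMap ℝ ℂ)) *ᵥ w) := by
  funext i
  simp only [Matrix.mulVec, dotProduct, Pi.star_apply, Matrix.map_apply]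
  rw [star_sum]
  congr 1; funext j
  rw [star_mul']
  congr 1
  simp [Complex.star_def, Complex.conj_ofReal]

lemma key_id {p r : ℕ} (QQ : Matrix (Fin p) (Fin p) ℝ) (RR : Matrix (Fin r) (Fin r) ℝ)
    (A K : Matrix (Fin p) (Fin p) ℝ) (B : Matrix (Fin p) (Fin r) ℝ)
    (S T : Matrix (Fin r) (Fin r) ℝ) (L : Matrix (Fin r) (Fin p) ℝ)
    (hK : Kᵀ = K) (hTt : Tᵀ = T) (hT2 : T * S = 1)
    (hS : S = Bᵀ * K * B + RR)
    (hric : K = QQ + Aᵀ * K * A - Aᵀ * K * B * T * (Bᵀ * K * A))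
    (hL : L = -(T * (Bᵀ * K * A))) :
    K - (A + B * L)ᵀ * K * (A + B * L) = QQ + Lᵀ * RR * L := by
  have hLt : Lᵀ = -(Aᵀ * K * B * T) := by
    rw [hL, Matrix.transpose_neg, Matrix.transpose_mul, hTt]
    congr 1
    rw [Matrix.transpose_mul, Matrix.transpose_mul, Matrix.transpose_transpose, hK,
      ← Matrix.mul_assoc]
  have expand : (A + B * L)ᵀ * K * (A + B * L)
      = Aᵀ * K * A + Aᵀ * K * (B * L) + Lᵀ * (Bᵀ * K * A) + Lᵀ * (Bᵀ * K * B) * L := by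
    rw [Matrix.transpose_add, Matrix.transpose_mul]
    simp only [Matrix.add_mul, Matrix.mul_add, Matrix.mul_assoc]
    abel
  have e1 : Aᵀ * K * (B * L) = -(Aᵀ * K * B * T * (Bᵀ * K * A)) := by
    rw [hL]
    simp only [Matrix.mul_neg, Matrix.mul_assoc]
  have e2 : Lᵀ * (Bᵀ * K * A) = -(Aᵀ * K * B * T * (Bᵀ * K * A)) := by
    rw [hLt, Matrix.neg_mul]
  have e3 : Lᵀ * (Bᵀ * K * B) * L = Aᵀ * K * B * T * (Bᵀ * K * A) - Lᵀ * RR * L := by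
    have hBKB : Bᵀ * K * B = S - RR := by rw [hS]; abel
    rw [hBKB, Matrix.mul_sub, Matrix.sub_mul]
    congr 1
    rw [hLt, hL]
    simp only [Matrix.neg_mul, Matrix.mul_neg, neg_neg]
    rw [Matrix.mul_assoc (Aᵀ * K * B) T S, hT2, Matrix.mul_one, ← Matrix.mul_assoc]
  rw [expand, e1, e2, e3]
  nth_rewrite 1 [hric]
  abel

theorem riccati_solution_gives_stabilizer {p r : ℕ}
    (Q : Matrix (Fin p) (Fin p) ℝ) (R : Matrix (Fin r) (Fin r) ℝ)
    (A : Matrix (Fin p) (Fin p) ℝ) (B : Matrix (Fin p) (Fin r) ℝ)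
    (hQ : Q.PosDef) (hR : R.PosDef)
    (K : Matrix (Fin p) (Fin p) ℝ) (hK : K.PosSemidef)
    (hric : K = Q + Aᵀ * K * A - Aᵀ * K * B * (Bᵀ * K * B + R)⁻¹ * (Bᵀ * K * A))
    (L : Matrix (Fin r) (Fin p) ℝ) (hL : L = -(Bᵀ * K * B + R)⁻¹ * (Bᵀ * K * A)) :
    SpecRadiusLtOne (A + B * L) := by
  classical
  have hKsym : Kᵀ = K := by
    have h : Kᴴ = K := hK.isHermitian
    rwa [Matrix.conjTranspose_eq_transpose_of_trivial] at h
  have hBKB : (Bᵀ * K * B).PosSemidef := by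
    have h := hK.conjTranspose_mul_mul_same B
    rwa [Matrix.conjTranspose_eq_transpose_of_trivial] at h
  have hSpos : (Bᵀ * K * B + R).PosDef := Matrix.PosDef.posSemidef_add hBKB hR
  have hSsym : (Bᵀ * K * B + R)ᵀ = Bᵀ * K * B + R := by
    have h : (Bᵀ * K * B + R)ᴴ = Bᵀ * K * B + R := hSpos.isHermitian
    rwa [Matrix.conjTranspose_eq_transpose_of_trivial] at h
  have hSd : IsUnit (Bᵀ * K * B + R).det := isUnit_iff_ne_zero.mpr hSpos.det_pos.ne'
  have hT2 : (Bᵀ * K * B + R)⁻¹ * (Bᵀ * K * B + R) = 1 := Matrix.nonsing_inv_mul _ hSd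
  have hTt : ((Bᵀ * K * B + R)⁻¹)ᵀ = (Bᵀ * K * B + R)⁻¹ := by
    rw [Matrix.transpose_nonsing_inv, hSsym]
  have key : K - (A + B * L)ᵀ * K * (A + B * L) = Q + Lᵀ * R * L :=
    key_id Q R A K B (Bᵀ * K * B + R) (Bᵀ * K * B + R)⁻¹ L hKsym hTt hT2 rfl hric
      (by rw [hL, Matrix.neg_mul])
  intro lam hroot
  set Mc := (A + B * L).map (algebraMap ℝ ℂ) with hMc
  have h0 : (Matrix.diagonal (fun _ => lam) - Mc).det = 0 := by
    rw [← eval_charpoly']; exact hroot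
  obtain ⟨v, hv0, hv⟩ := Matrix.exists_mulVec_eq_zero_iff.mpr h0
  have heig : Mc *ᵥ v = lam • v := by
    rw [Matrix.sub_mulVec, sub_eq_zero] at hv
    rw [← hv]
    funext i
    rw [Matrix.mulVec_diagonal]
    rfl
  set Kc := K.map (algebraMap ℝ ℂ) with hKc
  set Qc := Q.map (algebraMap ℝ ℂ) with hQc
  set Rc := R.map (algebraMap ℝ ℂ) with hRc
  set Lc := L.map (algebraMap ℝ ℂ) with hLc
  have keyC : Kc - Mcᵀ * Kc * Mc = Qc + Lcᵀ * Rc * Lc := by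
    simp only [hMc, hKc, hQc, hRc, hLc, ← Matrix.transpose_map, ← Matrix.map_mul]
    rw [← Matrix.map_sub _ (map_sub (algebraMap ℝ ℂ)), ← Matrix.map_add _ (map_add (algebraMap ℝ ℂ)),
      key]
  have hq := congrArg (fun (X : Matrix (Fin p) (Fin p) ℂ) => star v ⬝ᵥ (X *ᵥ v)) keyC
  simp only [Matrix.sub_mulVec, Matrix.add_mulVec, dotProduct_sub, dotProduct_add] at hq
  have hMKM : star v ⬝ᵥ ((Mcᵀ * Kc * Mc) *ᵥ v)
      = (Complex.normSq lam : ℂ) * (star v ⬝ᵥ (Kc *ᵥ v)) := by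
    rw [Matrix.mul_assoc, ← Matrix.mulVec_mulVec, Matrix.dotProduct_mulVec,
      Matrix.vecMul_transpose]
    have h1 : Mc *ᵥ star v = star (lam • v) := by
      rw [star_mulVec_map, heig]
    rw [h1, ← Matrix.mulVec_mulVec, heig, Matrix.mulVec_smul, star_smul,
      smul_dotProduct, dotProduct_smul]
    rw [smul_eq_mul, smul_eq_mul, ← mul_assoc]
    congr 1
    rw [Complex.star_def, mul_comm, Complex.mul_conj]
  rw [hMKM] at hq
  have hKcpsd : Kc.PosSemidef := map_psd hK
  have hQcpsd : Qc.PosSemidef := map_psd hQ.posSemidef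
  have hRcpsd : Rc.PosSemidef := map_psd hR.posSemidef
  have hLRL : (Lcᵀ * Rc * Lc).PosSemidef := by
    have h1 : Lcᵀ = Lcᴴ := by
      rw [hLc, ← ctmap, Matrix.conjTranspose_eq_transpose_of_trivial, Matrix.transpose_map]
    rw [h1]
    exact hRcpsd.conjTranspose_mul_mul_same Lc
  have ha : 0 ≤ (star v ⬝ᵥ (Kc *ᵥ v)).re := by
    have h := hKcpsd.dotProduct_mulVec_nonneg v
    rw [Complex.le_def] at h
    simpa using h.1
  have hd : 0 ≤ (star v ⬝ᵥ ((Lcᵀ * Rc * Lc) *ᵥ v)).re := by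
    have h := hLRL.dotProduct_mulVec_nonneg v
    rw [Complex.le_def] at h
    simpa using h.1
  have hb : 0 < (star v ⬝ᵥ (Qc *ᵥ v)).re := by
    have h1 : (0 : ℂ) ≤ star v ⬝ᵥ (Qc *ᵥ v) := hQcpsd.dotProduct_mulVec_nonneg v
    have h2 : star v ⬝ᵥ (Qc *ᵥ v) ≠ 0 := by
      intro h
      have h3 : Qc *ᵥ v = 0 := (hQcpsd.dotProduct_mulVec_zero_iff v).mp h
      have h4 : Qc.det ≠ 0 := by
        have hdet : Qc.det = algebraMap ℝ ℂ Q.det := by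
          rw [hQc, ← RingHom.mapMatrix_apply, ← RingHom.map_det]
        rw [hdet]
        simpa using hQ.det_pos.ne'
      exact h4 (Matrix.exists_mulVec_eq_zero_iff.mp ⟨v, hv0, h3⟩)
    have h5 := lt_of_le_of_ne h1 (Ne.symm h2)
    rw [Complex.lt_def] at h5
    simpa using h5.1
  have hre := congrArg Complex.re hq
  simp only [Complex.sub_re, Complex.add_re] at hre
  rw [show ((Complex.normSq lam : ℂ) * (star v ⬝ᵥ (Kc *ᵥ v))).re
      = Complex.normSq lam * (star v ⬝ᵥ (Kc *ᵥ v)).re from Complex.re_ofReal_mul _ _] at hre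
  have hs : Complex.normSq lam < 1 := by nlinarith [ha, hb, hd]
  have habs := Complex.sq_norm lam
  nlinarith [norm_nonneg lam, habs]
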